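/- The sequence r_n = ( (n−2)(n+1) / ((n−1)n) )^(n(n−1)/2) · ( (n−2)/(n−1) )^n is strictly increasing for n ≥ 5, i.e., for every integer n ≥ 5, r_n < r_{n+1}. -/

import Mathlib

lemma bern2 (c : ℝ) (hc : 0 ≤ c) : ∀ m : ℕ,
    1 + (m:ℝ)*c + ((m:ℝ)*((m:ℝ)-1)/2)*c^2 ≤ (1+c)^m := by
  intro m
  induction m with
  | zero => norm_num
  | succ m ih =>
    have hp : (0:ℝ) ≤ (1+c)^m := by positivity
    have hm : (0:ℝ) ≤ (m:ℝ)*((m:ℝ)-1) := by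
      rcases Nat.eq_zero_or_pos m with h|h
      · simp [h]
      · have : (1:ℝ) ≤ (m:ℝ) := by exact_mod_cast h
        nlinarith
    push_cast
    calc 1 + ((m:ℝ)+1)*c + (((m:ℝ)+1)*(((m:ℝ)+1)-1)/2)*c^2
        ≤ (1 + (m:ℝ)*c + ((m:ℝ)*((m:ℝ)-1)/2)*c^2) * (1+c) := by
          nlinarith [mul_nonneg hm (mul_nonneg (mul_nonneg hc hc) hc)]
      _ ≤ (1+c)^m * (1+c) := by
          nlinarith [mul_nonneg (mul_nonneg (Nat.cast_nonneg (α := ℝ) m) hc) hc]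
      _ = (1+c)^(m+1) := (pow_succ _ _).symm

lemma bernup (y : ℝ) (hy : 0 ≤ y) : ∀ n : ℕ, (1+y)^n * (1 - (n:ℝ)*y) ≤ 1 := by
  intro n
  induction n with
  | zero => norm_num
  | succ n ih =>
    have hp : (0:ℝ) ≤ (1+y)^n := by positivity
    push_cast
    calc (1+y)^(n+1) * (1 - ((n:ℝ)+1)*y)
        = (1+y)^n * (1 - (n:ℝ)*y) - (1+y)^n * (((n:ℝ)+1)*y^2) := by
          rw [pow_succ]; ring
      _ ≤ 1 := by
          nlinarith [mul_nonneg hp (mul_nonneg (by positivity : (0:ℝ) ≤ (n:ℝ)+1) (sq_nonneg y))]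

set_option maxHeartbeats 1000000 in
theorem rn_strict_mono :
    ∀ n : ℕ, 5 ≤ n →
      (((n : ℝ) - 2) * ((n : ℝ) + 1) / (((n : ℝ) - 1) * (n : ℝ))) ^ (n * (n - 1) / 2)
          * (((n : ℝ) - 2) / ((n : ℝ) - 1)) ^ n
        < (((n : ℝ) + 1 - 2) * ((n : ℝ) + 1 + 1) / (((n : ℝ) + 1 - 1) * ((n : ℝ) + 1)))
              ^ ((n + 1) * n / 2)
            * (((n : ℝ) + 1 - 2) / ((n : ℝ) + 1 - 1)) ^ (n + 1) := by
  intro n hn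
  obtain ⟨p, rfl⟩ : ∃ p, n = p + 5 := ⟨n - 5, by omega⟩
  -- exponent arithmetic
  obtain ⟨k, hk⟩ : Even ((p+4) * (p+5)) := by
    have := Nat.even_mul_succ_self (p+4); simpa using this
  have hk2 : (p+5) * ((p+5) - 1) = 2 * k := by
    rw [show (p+5) - 1 = p + 4 from rfl, Nat.mul_comm, hk]; ring
  have e1 : (p+5) * ((p+5) - 1) / 2 = k := by rw [hk2]; omega
  have e2 : (p+5+1) * (p+5) / 2 = k + (p+5) := by
    have h : (p+5+1) * (p+5) = 2 * k + 2 * (p+5) := by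
      have h' : (p+5+1) * (p+5) = (p+5) * ((p+5) - 1) + 2 * (p+5) := by
        rw [show (p+5) - 1 = p + 4 from rfl]; ring
      omega
    rw [h]; omega
  rw [e1, e2]
  -- real setup
  obtain ⟨x, hxdef⟩ : ∃ x : ℝ, x = (p : ℝ) + 5 := ⟨_, rfl⟩
  have hcast : ((p+5 : ℕ) : ℝ) = x := by rw [hxdef]; push_cast; ring
  rw [hcast]
  have hx : (5:ℝ) ≤ x := by
    rw [hxdef]; have := Nat.cast_nonneg (α := ℝ) p; linarith
  have hx0 : (0:ℝ) < x := by linarith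
  have h1 : (0:ℝ) < x - 1 := by linarith
  have h2 : (0:ℝ) < x - 2 := by linarith
  have h3 : (0:ℝ) < x + 1 := by linarith
  have h4 : (0:ℝ) < x + 2 := by linarith
  have hkr : (k : ℝ) = x * (x-1) / 2 := by
    have hkcast : ((p:ℝ)+4) * ((p:ℝ)+5) = (k:ℝ) + (k:ℝ) := by exact_mod_cast hk
    rw [hxdef]; linear_combination -hkcast / 2
  obtain ⟨nn, hnn⟩ : ∃ m : ℕ, m = p + 5 := ⟨_, rfl⟩
  rw [← hnn]
  have hnr : ((nn : ℕ) : ℝ) = x := by rw [hnn]; exact hcast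
  -- abbreviations
  obtain ⟨A, hA⟩ : ∃ A : ℝ, A = (x - 2) * (x + 1) / ((x - 1) * x) := ⟨_, rfl⟩
  obtain ⟨B, hB⟩ : ∃ B : ℝ, B = (x - 2) / (x - 1) := ⟨_, rfl⟩
  obtain ⟨A', hA'⟩ : ∃ A' : ℝ, A' = (x + 1 - 2) * (x + 1 + 1) / ((x + 1 - 1) * (x + 1)) := ⟨_, rfl⟩
  obtain ⟨B', hB'⟩ : ∃ B' : ℝ, B' = (x + 1 - 2) / (x + 1 - 1) := ⟨_, rfl⟩
  obtain ⟨c, hc⟩ : ∃ c : ℝ, c = 4 / ((x+1)^2 * (x-2)) := ⟨_, rfl⟩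
  obtain ⟨y, hy⟩ : ∃ y : ℝ, y = (x^2 - 5*x + 2) / ((x-1)^3 * (x+2)) := ⟨_, rfl⟩
  rw [← hA, ← hB, ← hA', ← hB']
  have hne0 : x ≠ 0 := hx0.ne'
  have hne1 : x - 1 ≠ 0 := h1.ne'
  have hne2 : x - 2 ≠ 0 := h2.ne'
  have hne3 : x + 1 ≠ 0 := h3.ne'
  have hne4 : x + 2 ≠ 0 := h4.ne'
  have hcpos : 0 < c := by rw [hc]; positivity
  have hynum : (0:ℝ) ≤ x^2 - 5*x + 2 := by nlinarith
  have hypos : 0 ≤ y := by rw [hy]; positivity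
  have hApos : 0 < A := by rw [hA]; positivity
  have hBpos : 0 < B := by rw [hB]; positivity
  -- key base identities
  have hbase1 : A' = A * (1 + c) := by
    rw [hA', hA, hc]; field_simp; ring_nf; field_simp
  have hbase2 : A * (1 + c) * (B' * (1 + y)) = B := by
    rw [hA, hB, hB', hc, hy]; field_simp; ring_nf; field_simp
  have hB'x : B' * x = x - 1 := by rw [hB']; field_simp; ring_nf; field_simp
  have hny : x * y < 1 := by
    rw [hy, mul_div_assoc']
    rw [div_lt_one (by positivity)]
    nlinarith
  have hnypos : 0 < 1 - x * y := by linarith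
  -- core rational inequality
  have hpoly : x < ((1 + (k:ℝ)*c + ((k:ℝ)*((k:ℝ)-1)/2)*c^2) * (x-1)) * (1 - x*y) := by
    rw [hkr, hc, hy]
    have expand : ((1 + x*(x-1)/2 * (4/((x+1)^2*(x-2))) +
        (x*(x-1)/2 * (x*(x-1)/2 - 1)/2) * (4/((x+1)^2*(x-2)))^2) * (x-1)) *
        (1 - x * ((x^2 - 5*x + 2)/((x-1)^3*(x+2)))) - x
        = (8 + 28*x - 74*x^2 - 67*x^3 + 122*x^4 + 43*x^5 - 62*x^6 - 5*x^7 + 6*x^8 + x^9)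
          / (((x+1)^2*(x-2))^2 * ((x-1)^3*(x+2))) := by
      field_simp
      ring
    have ht : (0:ℝ) ≤ x - 5 := by linarith
    have hP : 0 < 8 + 28*x - 74*x^2 - 67*x^3 + 122*x^4 + 43*x^5 - 62*x^6 - 5*x^7 + 6*x^8 + x^9 := by
      nlinarith [pow_nonneg ht 2, pow_nonneg ht 3, pow_nonneg ht 4, pow_nonneg ht 5,
        pow_nonneg ht 6, pow_nonneg ht 7, pow_nonneg ht 8, pow_nonneg ht 9, ht]
    have hD : (0:ℝ) < ((x+1)^2*(x-2))^2 * ((x-1)^3*(x+2)) := by positivity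
    have := div_pos hP hD
    linarith [expand, this]
  -- main inequality
  have hmain : (1+y)^nn * x < (1+c)^k * (x-1) := by
    have hb2 := bern2 c hcpos.le k
    have hbu := bernup y hypos nn
    rw [hnr] at hbu
    have step1 : (1+y)^nn * x ≤ x / (1 - x*y) := by
      rw [le_div_iff₀ hnypos]
      nlinarith [mul_le_mul_of_nonneg_right hbu hx0.le]
    have step2 : x / (1 - x*y) < (1 + (k:ℝ)*c + ((k:ℝ)*((k:ℝ)-1)/2)*c^2) * (x-1) := by
      rw [div_lt_iff₀ hnypos]; exact hpoly
    have step3 : (1 + (k:ℝ)*c + ((k:ℝ)*((k:ℝ)-1)/2)*c^2) * (x-1) ≤ (1+c)^k * (x-1) :=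
      mul_le_mul_of_nonneg_right hb2 h1.le
    linarith
  have hfinal : (A^k * B^nn) * ((1+y)^nn * x) < (A^k * B^nn) * ((1+c)^k * (x-1)) :=
    mul_lt_mul_of_pos_left hmain (mul_pos (pow_pos hApos k) (pow_pos hBpos nn))
  have h5 : (A*(1+c)*(B'*(1+y)))^nn = B^nn := by rw [hbase2]
  have heq : A'^(k+nn) * B'^(nn+1) * ((1+y)^nn * x) = (A^k * B^nn) * ((1+c)^k * (x-1)) := by
    calc A'^(k+nn) * B'^(nn+1) * ((1+y)^nn * x)
        = (A*(1+c))^(k+nn) * B'^(nn+1) * ((1+y)^nn * x) := by rw [hbase1]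
      _ = (A*(1+c))^k * (A*(1+c)*(B'*(1+y)))^nn * (B'*x) := by
          rw [pow_add, pow_succ, mul_pow (A*(1+c)) (B'*(1+y)) nn,
            mul_pow A (1+c) nn, mul_pow B' (1+y) nn, mul_pow A (1+c) k]
          ring
      _ = (A*(1+c))^k * B^nn * (x-1) := by rw [h5, hB'x]
      _ = (A^k * B^nn) * ((1+c)^k * (x-1)) := by rw [mul_pow]; ring
  rw [← heq] at hfinal
  have hGpos : (0:ℝ) < 1 + y := by linarith
  exact lt_of_mul_lt_mul_right hfinal (mul_pos (pow_pos hGpos nn) hx0).le
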